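/- Let p be a prime number. For every integer n ≥ 1, the ℤ_p-submodule of ℚ_p generated by the elements p^m/m! for all integers m ≥ n is equal to p^{[n]}·ℤ_p. (In other words, the ideal (p^{[n]}) ⊆ ℤ_p is the n-th divided power of the ideal (p) ⊆ ℤ_p.) -/

import Mathlib

open Padic

private lemma padic_val_pow {p : ℕ} [Fact p.Prime] {x : ℚ_[p]} (hx : x ≠ 0) (m : ℕ) :
    (x ^ m).valuation = m * x.valuation := by
  induction m with
  | zero => simp [Padic.valuation_one]
  | succ k ih =>
      rw [pow_succ, Padic.valuation_mul (pow_ne_zero k hx) hx, ih]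
      push_cast; ring

private lemma padic_val_inv {p : ℕ} [Fact p.Prime] {x : ℚ_[p]} (hx : x ≠ 0) :
    (x⁻¹).valuation = -x.valuation := by
  have h : x * x⁻¹ = 1 := mul_inv_cancel₀ hx
  have := Padic.valuation_mul hx (inv_ne_zero hx) (p := p)
  rw [h, Padic.valuation_one] at this
  omega

private lemma padic_val_zpow {p : ℕ} [Fact p.Prime] {x : ℚ_[p]} (hx : x ≠ 0) (L : ℤ) :
    (x ^ L).valuation = L * x.valuation := by
  cases L with
  | ofNat k => rw [Int.ofNat_eq_coe, zpow_natCast, padic_val_pow hx]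
  | negSucc k =>
      rw [zpow_negSucc, padic_val_inv (pow_ne_zero _ hx), padic_val_pow hx, Int.negSucc_eq]
      push_cast; ring

/-- Let `p` be a prime. For every integer `n ≥ 1`, the
`ℤ_p`-submodule of `ℚ_p` generated by the elements `p^m/m!` for all `m ≥ n`
equals `p^{[n]}·ℤ_p`, where `[n]` is the Mazur number of `n` (the least element
of `{m − v_p(m!) : m ≥ n}`). -/
theorem stmt_3 (p : ℕ) [hp : Fact p.Prime] (n : ℕ) (hn : 1 ≤ n) (L : ℤ)
    (hL : IsLeast {v : ℤ | ∃ m : ℕ, n ≤ m ∧ v = (m : ℤ) - padicValNat p (Nat.factorial m)} L) :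
    Submodule.span ℤ_[p]
        {x : ℚ_[p] | ∃ m : ℕ, n ≤ m ∧ x = (p : ℚ_[p]) ^ m / (Nat.factorial m : ℚ_[p])} =
      Submodule.span ℤ_[p] {(p : ℚ_[p]) ^ L} := by
  have hp0 : (p : ℚ_[p]) ≠ 0 := Nat.cast_ne_zero.mpr hp.out.ne_zero
  have hpL : (p : ℚ_[p]) ^ L ≠ 0 := zpow_ne_zero _ hp0
  have hfact : ∀ m : ℕ, ((Nat.factorial m : ℚ_[p])) ≠ 0 := fun m =>
    Nat.cast_ne_zero.mpr (Nat.factorial_ne_zero m)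
  -- valuation of a generator
  have hvgen : ∀ m : ℕ, ((p : ℚ_[p]) ^ m / (Nat.factorial m : ℚ_[p])).valuation
      = (m : ℤ) - padicValNat p (Nat.factorial m) := by
    intro m
    rw [div_eq_mul_inv,
      Padic.valuation_mul (pow_ne_zero _ hp0) (inv_ne_zero (hfact m)),
      padic_val_pow hp0, padic_val_inv (hfact m), Padic.valuation_p,
      Padic.valuation_natCast]
    ring
  have hvL : ((p : ℚ_[p]) ^ L).valuation = L := by
    rw [padic_val_zpow hp0, Padic.valuation_p, mul_one]
  apply le_antisymm
  · rw [Submodule.span_le]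
    rintro x ⟨m, hm, rfl⟩
    set x := (p : ℚ_[p]) ^ m / (Nat.factorial m : ℚ_[p]) with hxdef
    have hx0 : x ≠ 0 := div_ne_zero (pow_ne_zero _ hp0) (hfact m)
    have hq : ‖x / (p : ℚ_[p]) ^ L‖ ≤ 1 := by
      rw [Padic.norm_le_one_iff_val_nonneg, div_eq_mul_inv,
        Padic.valuation_mul hx0 (inv_ne_zero hpL), padic_val_inv hpL, hvgen, hvL]
      have := hL.2 ⟨m, hm, rfl⟩
      omega
    refine Submodule.mem_span_singleton.mpr ⟨⟨x / (p : ℚ_[p]) ^ L, hq⟩, ?_⟩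
    show (x / (p : ℚ_[p]) ^ L) * (p : ℚ_[p]) ^ L = x
    field_simp
  · rw [Submodule.span_le, Set.singleton_subset_iff]
    obtain ⟨m0, hm0, hLval⟩ := hL.1
    set x := (p : ℚ_[p]) ^ m0 / (Nat.factorial m0 : ℚ_[p]) with hxdef
    have hx0 : x ≠ 0 := div_ne_zero (pow_ne_zero _ hp0) (hfact m0)
    have hq : ‖(p : ℚ_[p]) ^ L / x‖ ≤ 1 := by
      rw [Padic.norm_le_one_iff_val_nonneg, div_eq_mul_inv,
        Padic.valuation_mul hpL (inv_ne_zero hx0), padic_val_inv hx0, hvgen, hvL]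
      omega
    have hmem1 : (p : ℚ_[p]) ^ L ∈ Submodule.span ℤ_[p] {x} :=
      Submodule.mem_span_singleton.mpr ⟨⟨(p : ℚ_[p]) ^ L / x, hq⟩, by
        show ((p : ℚ_[p]) ^ L / x) * x = (p : ℚ_[p]) ^ L
        field_simp⟩
    refine Submodule.span_mono ?_ hmem1
    rw [Set.singleton_subset_iff]
    exact ⟨m0, hm0, rfl⟩
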